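/- If T = (a, β; γ, d) is a matrix over the GL_{p,q}(1|1) algebra with a, d invertible, and Δ₁ = ad - p⁻¹βγ, Δ₂ = da - q⁻¹γβ are invertible, then the matrix S = (dΔ₁⁻¹, -q⁻¹βΔ₂⁻¹; -p⁻¹γΔ₁⁻¹, aΔ₂⁻¹) satisfies T·S = I = S·T, i.e., S is a two-sided inverse of T. -/

import Mathlib

section aux
variable {K : Type*} [Field K] {R : Type*} [Ring R] [Algebra K R]

lemma aux_comm {X D u : R} (h1 : X * D = 1) (h2 : D * X = 1)
    (h : X * u = u * X) : D * u = u * D := by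
  calc D * u = D * (u * (X * D)) := by rw [h1, mul_one]
    _ = D * (u * X) * D := by noncomm_ring
    _ = D * (X * u) * D := by rw [h]
    _ = (D * X) * (u * D) := by noncomm_ring
    _ = u * D := by rw [h2, one_mul]

lemma aux_swap {X D u : R} (k : K) (h1 : X * D = 1) (h2 : D * X = 1)
    (h : X * u = k • (u * X)) : u * D = k • (D * u) := by
  calc u * D = (D * X) * u * D := by rw [h2, one_mul]
    _ = D * (X * u) * D := by noncomm_ring
    _ = D * (k • (u * X)) * D := by rw [h]
    _ = k • (D * u * (X * D)) := by
        rw [mul_smul_comm, smul_mul_assoc, mul_assoc, mul_assoc, mul_assoc]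
    _ = k • (D * u) := by rw [h1, mul_one]

lemma aux_inv_smul {k : K} {x y : R} (hk : k ≠ 0) (h : x = k • y) : y = k⁻¹ • x := by
  rw [h, smul_smul, inv_mul_cancel₀ hk, one_smul]

end aux

/-- The matrix S = (dΔ₁⁻¹, -q⁻¹βΔ₂⁻¹; -p⁻¹γΔ₁⁻¹, aΔ₂⁻¹) is a two-sided inverse
of T = (a, β; γ, d). -/
theorem gl_pq_inverse_matrix
{K : Type*} [Field K] {R : Type*} [Ring R] [Algebra K R]
    (p q : K) (hp : p ≠ 0) (hq : q ≠ 0)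
    (a β γ d : R)
    (hab : a * β = q • (β * a)) (hdb : d * β = q • (β * d))
    (hag : a * γ = p • (γ * a)) (hdg : d * γ = p • (γ * d))
    (hbg : β * γ = -((p * q⁻¹) • (γ * β)))
    (hb2 : β ^ 2 = 0) (hg2 : γ ^ 2 = 0)
    (had : a * d - d * a = (p - q⁻¹) • (γ * β))
    (a' d' D1 D2 : R)
    (ha1 : a * a' = 1) (ha2 : a' * a = 1)
    (hd1 : d * d' = 1) (hd2 : d' * d = 1)
    (hD1 : (a * d - p⁻¹ • (β * γ)) * D1 = 1) (hD1' : D1 * (a * d - p⁻¹ • (β * γ)) = 1)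
    (hD2 : (d * a - q⁻¹ • (γ * β)) * D2 = 1) (hD2' : D2 * (d * a - q⁻¹ • (γ * β)) = 1) :
    (!![a, β; γ, d] : Matrix (Fin 2) (Fin 2) R) *
      !![d * D1, -(q⁻¹ • (β * D2)); -(p⁻¹ • (γ * D1)), a * D2] = 1 ∧
    (!![d * D1, -(q⁻¹ • (β * D2)); -(p⁻¹ • (γ * D1)), a * D2] : Matrix (Fin 2) (Fin 2) R) *
      !![a, β; γ, d] = 1 := by
  set e1 := a * d - p⁻¹ • (β * γ) with he1
  set e2 := d * a - q⁻¹ • (γ * β) with he2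
  have hb2' : β * β = 0 := by rw [← sq]; exact hb2
  have hg2' : γ * γ = 0 := by rw [← sq]; exact hg2
  have hbd : β * d = q⁻¹ • (d * β) := aux_inv_smul hq hdb
  have hba : β * a = q⁻¹ • (a * β) := aux_inv_smul hq hab
  have hgd : γ * d = p⁻¹ • (d * γ) := aux_inv_smul hp hdg
  have hga : γ * a = p⁻¹ • (a * γ) := aux_inv_smul hp hag
  have hda : d * a = a * d - (p - q⁻¹) • (γ * β) := by rw [← had, sub_sub_cancel]
  have hE1 : e1 = a * d + q⁻¹ • (γ * β) := by
    rw [he1, hbg, smul_neg, smul_smul, sub_neg_eq_add,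
      show p⁻¹ * (p * q⁻¹) = q⁻¹ by field_simp]
  have hE2 : e2 = e1 - (p + q⁻¹) • (γ * β) := by
    rw [he2, hE1, hda]; module
  have hE2' : e1 = e2 + (p + q⁻¹) • (γ * β) := by rw [hE2, sub_add_cancel]
  have hdae : d * a = e1 - p • (γ * β) := by rw [hda, hE1]; module
  have hade : a * d = e1 - q⁻¹ • (γ * β) := by rw [hE1]; module
  -- zero word lemmas
  have wgb_b : (γ * β) * β = 0 := by rw [mul_assoc, hb2', mul_zero]
  have wbgb : β * (γ * β) = 0 := by
    rw [← mul_assoc, hbg, neg_mul, smul_mul_assoc, mul_assoc, hb2', mul_zero,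
      smul_zero, neg_zero]
  have wggb : γ * (γ * β) = 0 := by rw [← mul_assoc, hg2', zero_mul]
  have wgb_g : (γ * β) * γ = 0 := by
    rw [mul_assoc, hbg, mul_neg, mul_smul_comm, wggb, smul_zero, neg_zero]
  -- moving letters across words
  have wgb_d : (γ * β) * d = (q⁻¹ * p⁻¹) • (d * (γ * β)) := by
    rw [mul_assoc, hbd, mul_smul_comm, ← mul_assoc, hgd, smul_mul_assoc, smul_smul,
      mul_assoc]
  have wgb_a : (γ * β) * a = (q⁻¹ * p⁻¹) • (a * (γ * β)) := by
    rw [mul_assoc, hba, mul_smul_comm, ← mul_assoc, hga, smul_mul_assoc, smul_smul,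
      mul_assoc]
  have wad_b : (a * d) * β = (q * q) • (β * (a * d)) := by
    rw [mul_assoc, hdb, mul_smul_comm, ← mul_assoc, hab, smul_mul_assoc, smul_smul,
      mul_assoc]
  have wad_g : (a * d) * γ = (p * p) • (γ * (a * d)) := by
    rw [mul_assoc, hdg, mul_smul_comm, ← mul_assoc, hag, smul_mul_assoc, smul_smul,
      mul_assoc]
  have wda_b : (d * a) * β = (q * q) • (β * (d * a)) := by
    rw [mul_assoc, hab, mul_smul_comm, ← mul_assoc, hdb, smul_mul_assoc, smul_smul,
      mul_assoc]
  have wda_g : (d * a) * γ = (p * p) • (γ * (d * a)) := by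
    rw [mul_assoc, hag, mul_smul_comm, ← mul_assoc, hdg, smul_mul_assoc, smul_smul,
      mul_assoc]
  have wadd : (a * d) * d = d * (a * d) + ((p - q⁻¹) * (q⁻¹ * p⁻¹)) • (d * (γ * β)) := by
    calc (a * d) * d = (d * a + (p - q⁻¹) • (γ * β)) * d := by
          rw [show a * d = d * a + (p - q⁻¹) • (γ * β) by rw [hda]; abel]
      _ = (d * a) * d + (p - q⁻¹) • ((γ * β) * d) := by
          rw [add_mul, smul_mul_assoc]
      _ = d * (a * d) + ((p - q⁻¹) * (q⁻¹ * p⁻¹)) • (d * (γ * β)) := by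
          rw [mul_assoc, wgb_d, smul_smul]
  have wdaa : (d * a) * a = a * (d * a) - ((p - q⁻¹) * (q⁻¹ * p⁻¹)) • (a * (γ * β)) := by
    calc (d * a) * a = (a * d - (p - q⁻¹) • (γ * β)) * a := by rw [← hda]
      _ = (a * d) * a - (p - q⁻¹) • ((γ * β) * a) := by rw [sub_mul, smul_mul_assoc]
      _ = a * (d * a) - ((p - q⁻¹) * (q⁻¹ * p⁻¹)) • (a * (γ * β)) := by
          rw [mul_assoc, wgb_a, smul_smul]
  -- commutation of e1 with d and e2 with a
  have hE1d : e1 * d = d * e1 := by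
    rw [hE1, add_mul, smul_mul_assoc, wadd, wgb_d, mul_add, mul_smul_comm, smul_smul]
    match_scalars <;> field_simp <;> ring
  have hE2a : e2 * a = a * e2 := by
    rw [he2, sub_mul, smul_mul_assoc, wdaa, wgb_a, mul_sub, mul_smul_comm, smul_smul]
    match_scalars <;> field_simp <;> ring
  -- e's move across β and γ
  have hE1b : e1 * β = (q * q) • (β * e1) := by
    rw [hE1, add_mul, smul_mul_assoc, wad_b, wgb_b, smul_zero, add_zero, mul_add,
      mul_smul_comm, wbgb, smul_zero, add_zero]
  have hE1g : e1 * γ = (p * p) • (γ * e1) := by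
    rw [hE1, add_mul, smul_mul_assoc, wad_g, wgb_g, smul_zero, add_zero, mul_add,
      mul_smul_comm, wggb, smul_zero, add_zero]
  have hE2b : e2 * β = (q * q) • (β * e2) := by
    rw [he2, sub_mul, smul_mul_assoc, wda_b, wgb_b, smul_zero, sub_zero, mul_sub,
      mul_smul_comm, wbgb, smul_zero, sub_zero]
  have hE2g : e2 * γ = (p * p) • (γ * e2) := by
    rw [he2, sub_mul, smul_mul_assoc, wda_g, wgb_g, smul_zero, sub_zero, mul_sub,
      mul_smul_comm, wggb, smul_zero, sub_zero]
  -- D commutation lemmas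
  have hD1d : D1 * d = d * D1 := aux_comm hD1 hD1' hE1d
  have hD2a : D2 * a = a * D2 := aux_comm hD2 hD2' hE2a
  have hbD1 : β * D1 = (q * q) • (D1 * β) := aux_swap _ hD1 hD1' hE1b
  have hgD1 : γ * D1 = (p * p) • (D1 * γ) := aux_swap _ hD1 hD1' hE1g
  have hbD2 : β * D2 = (q * q) • (D2 * β) := aux_swap _ hD2 hD2' hE2b
  have hgD2 : γ * D2 = (p * p) • (D2 * γ) := aux_swap _ hD2 hD2' hE2g
  have hD2g : D2 * γ = (p * p)⁻¹ • (γ * D2) :=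
    aux_inv_smul (mul_ne_zero hp hp) hgD2
  have hD1b : D1 * β = (q * q)⁻¹ • (β * D1) :=
    aux_inv_smul (mul_ne_zero hq hq) hbD1
  -- D1 - D2
  have hsub : D1 - D2 = -((p + q⁻¹) • (D1 * ((γ * β) * D2))) := by
    calc D1 - D2 = D1 * (e2 * D2) - (D1 * e1) * D2 := by rw [hD2, hD1', mul_one, one_mul]
      _ = (D1 * e2) * D2 - (D1 * e1) * D2 := by rw [← mul_assoc D1 e2 D2]
      _ = (D1 * (e1 - (p + q⁻¹) • (γ * β))) * D2 - (D1 * e1) * D2 := by rw [← hE2]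
      _ = (D1 * e1) * D2 - (D1 * ((p + q⁻¹) • (γ * β))) * D2 - (D1 * e1) * D2 := by
          rw [mul_sub, sub_mul]
      _ = -((D1 * ((p + q⁻¹) • (γ * β))) * D2) := by rw [sub_sub_cancel_left]
      _ = -((p + q⁻¹) • (D1 * ((γ * β) * D2))) := by
          rw [mul_smul_comm, smul_mul_assoc, mul_assoc]
  have hDD : D1 * (γ * β) = D2 * (γ * β) := by
    have hz : (D1 * ((γ * β) * D2)) * (γ * β) = 0 := by
      have w1 : (γ * β) * D2 = ((q * q) * (p * p)) • (D2 * (γ * β)) := by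
        rw [mul_assoc, hbD2, mul_smul_comm, ← mul_assoc, hgD2, smul_mul_assoc,
          smul_smul, mul_assoc D2]
      have w2 : (γ * β) * (γ * β) = 0 := by rw [mul_assoc, wbgb, mul_zero]
      rw [w1, mul_smul_comm, smul_mul_assoc, mul_assoc D1, mul_assoc D2, w2,
        mul_zero, mul_zero, smul_zero]
    have h0 : (D1 - D2) * (γ * β) = 0 := by
      rw [hsub, neg_mul, smul_mul_assoc, hz, smul_zero, neg_zero]
    rw [sub_mul, sub_eq_zero] at h0
    exact h0
  have hbD12 : β * D1 = β * D2 := by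
    have h1 : β * (D1 - D2) = 0 := by
      rw [hsub, mul_neg, mul_smul_comm, ← mul_assoc, hbD1, smul_mul_assoc, mul_assoc,
        ← mul_assoc β (γ * β) D2, wbgb, zero_mul, mul_zero, smul_zero, smul_zero,
        neg_zero]
    rw [mul_sub, sub_eq_zero] at h1
    exact h1
  have hgD12 : γ * D1 = γ * D2 := by
    have h1 : γ * (D1 - D2) = 0 := by
      rw [hsub, mul_neg, mul_smul_comm, ← mul_assoc, hgD1, smul_mul_assoc, mul_assoc,
        ← mul_assoc γ (γ * β) D2, wggb, zero_mul, mul_zero, smul_zero, smul_zero,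
        neg_zero]
    rw [mul_sub, sub_eq_zero] at h1
    exact h1
  -- the eight entries
  have TS11 : a * (d * D1) + β * (-(p⁻¹ • (γ * D1))) = 1 := by
    calc a * (d * D1) + β * (-(p⁻¹ • (γ * D1)))
        = (a * d) * D1 - p⁻¹ • ((β * γ) * D1) := by
          rw [mul_neg, mul_smul_comm, ← mul_assoc, ← mul_assoc, ← sub_eq_add_neg]
      _ = e1 * D1 := by rw [he1, sub_mul, smul_mul_assoc]
      _ = 1 := hD1
  have TS12 : a * (-(q⁻¹ • (β * D2))) + β * (a * D2) = 0 := by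
    rw [mul_neg, mul_smul_comm, ← mul_assoc, hab, smul_mul_assoc, smul_smul,
      inv_mul_cancel₀ hq, one_smul, mul_assoc, neg_add_cancel]
  have TS21 : γ * (d * D1) + d * (-(p⁻¹ • (γ * D1))) = 0 := by
    rw [mul_neg, mul_smul_comm, ← mul_assoc d γ D1, hdg, smul_mul_assoc, smul_smul,
      inv_mul_cancel₀ hp, one_smul, ← mul_assoc, add_neg_cancel]
  have TS22 : γ * (-(q⁻¹ • (β * D2))) + d * (a * D2) = 1 := by
    calc γ * (-(q⁻¹ • (β * D2))) + d * (a * D2)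
        = (d * a) * D2 - q⁻¹ • ((γ * β) * D2) := by
          rw [mul_neg, mul_smul_comm, ← mul_assoc, ← mul_assoc, neg_add_eq_sub]
      _ = e2 * D2 := by rw [he2, sub_mul, smul_mul_assoc]
      _ = 1 := hD2
  have ST11 : (d * D1) * a + (-(q⁻¹ • (β * D2))) * γ = 1 := by
    calc (d * D1) * a + (-(q⁻¹ • (β * D2))) * γ
        = D1 * (d * a) + (-(q⁻¹ • (β * D2))) * γ := by rw [← hD1d, mul_assoc]
      _ = D1 * e1 - p • (D1 * (γ * β)) + (-(q⁻¹ • (β * D2))) * γ := by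
          rw [hdae, mul_sub, mul_smul_comm]
      _ = 1 - p • (D1 * (γ * β)) - q⁻¹ • ((β * D2) * γ) := by
          rw [hD1', neg_mul, smul_mul_assoc, ← sub_eq_add_neg]
      _ = 1 - p • (D1 * (γ * β)) - (q⁻¹ * (q * q)) • (D2 * (β * γ)) := by
          rw [hbD2, smul_mul_assoc, smul_smul, mul_assoc]
      _ = 1 - p • (D2 * (γ * β)) + (q⁻¹ * (q * q) * (p * q⁻¹)) • (D2 * (γ * β)) := by
          rw [hDD, hbg, mul_neg, mul_smul_comm, smul_neg, smul_smul, sub_neg_eq_add]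
      _ = 1 := by match_scalars <;> field_simp <;> ring
  have ST12 : (d * D1) * β + (-(q⁻¹ • (β * D2))) * d = 0 := by
    have t1 : (d * D1) * β = q⁻¹ • (β * (D2 * d)) := by
      calc (d * D1) * β = d * (D1 * β) := by rw [mul_assoc]
        _ = (q * q)⁻¹ • ((d * β) * D1) := by rw [hD1b, mul_smul_comm, mul_assoc]
        _ = ((q * q)⁻¹ * q) • (β * (d * D1)) := by
            rw [hdb, smul_mul_assoc, smul_smul, mul_assoc]
        _ = ((q * q)⁻¹ * q) • ((β * D1) * d) := by rw [← hD1d, ← mul_assoc]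
        _ = ((q * q)⁻¹ * q) • ((β * D2) * d) := by rw [hbD12]
        _ = q⁻¹ • (β * (D2 * d)) := by
            rw [mul_assoc, show (q * q)⁻¹ * q = q⁻¹ by field_simp]
    rw [t1, neg_mul, smul_mul_assoc, mul_assoc, add_neg_cancel]
  have ST21 : (-(p⁻¹ • (γ * D1))) * a + (a * D2) * γ = 0 := by
    have t2 : (a * D2) * γ = p⁻¹ • ((γ * D1) * a) := by
      calc (a * D2) * γ = (D2 * a) * γ := by rw [hD2a]
        _ = D2 * (p • (γ * a)) := by rw [mul_assoc, hag]
        _ = p • ((D2 * γ) * a) := by rw [mul_smul_comm, mul_assoc]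
        _ = (p * (p * p)⁻¹) • ((γ * D2) * a) := by
            rw [hD2g, smul_mul_assoc, smul_smul]
        _ = (p * (p * p)⁻¹) • ((γ * D1) * a) := by rw [hgD12]
        _ = p⁻¹ • ((γ * D1) * a) := by
            rw [show p * (p * p)⁻¹ = p⁻¹ by field_simp]
    rw [t2, neg_mul, smul_mul_assoc, neg_add_cancel]
  have ST22 : (-(p⁻¹ • (γ * D1))) * β + (a * D2) * d = 1 := by
    calc (-(p⁻¹ • (γ * D1))) * β + (a * D2) * d
        = -((p⁻¹ * (p * p)) • (D1 * (γ * β))) + (D2 * a) * d := by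
          rw [← hD2a, neg_mul, smul_mul_assoc, hgD1, smul_mul_assoc, smul_smul,
            mul_assoc D1 γ β]
      _ = -((p⁻¹ * (p * p)) • (D1 * (γ * β))) + (D2 * e1 - q⁻¹ • (D2 * (γ * β))) := by
          rw [mul_assoc, hade, mul_sub, mul_smul_comm]
      _ = -((p⁻¹ * (p * p)) • (D1 * (γ * β))) +
          ((1 + (p + q⁻¹) • (D2 * (γ * β))) - q⁻¹ • (D2 * (γ * β))) := by
          rw [hE2', mul_add, hD2', mul_smul_comm]
      _ = 1 := by rw [hDD]; match_scalars <;> field_simp <;> ring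
  rw [Matrix.mul_fin_two, Matrix.mul_fin_two, Matrix.one_fin_two]
  constructor
  · rw [TS11, TS12, TS21, TS22]
  · rw [ST11, ST12, ST21, ST22]
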